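/- Let 𝔅 be a bornology on a topological space X with a closed base, and suppose X is 𝔅-Lindelöf. Then the selection principles S1(𝒪_𝔅, Γ) and Sfin(𝒪_𝔅, Γ) are equivalent for X. -/

import Mathlib

open Set

universe u

def IsBornology {X : Type u} (B : Set (Set X)) : Prop :=
  ⋃₀ B = univ ∧ (∀ b ∈ B, ∀ b' ⊆ b, b' ∈ B) ∧ ∀ b ∈ B, ∀ b' ∈ B, b ∪ b' ∈ B

def HasClosedBase {X : Type u} [TopologicalSpace X] (B : Set (Set X)) : Prop :=
  ∃ B0 ⊆ B, (∀ b ∈ B0, IsClosed b) ∧ ∀ b ∈ B, ∃ b0 ∈ B0, b ⊆ b0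

def HasCompactBase {X : Type u} [TopologicalSpace X] (B : Set (Set X)) : Prop :=
  ∃ B0 ⊆ B, (∀ b ∈ B0, IsCompact b) ∧ ∀ b ∈ B, ∃ b0 ∈ B0, b ⊆ b0

def IsBCover {X : Type u} [TopologicalSpace X] (B U : Set (Set X)) : Prop :=
  (∀ u ∈ U, IsOpen u) ∧ univ ∉ U ∧ ∀ b ∈ B, ∃ u ∈ U, b ⊆ u

def IsGammaBCover {X : Type u} [TopologicalSpace X] (B U : Set (Set X)) : Prop :=
  U.Infinite ∧ (∀ u ∈ U, IsOpen u ∧ u ≠ univ) ∧ ∀ b ∈ B, {u ∈ U | ¬ b ⊆ u}.Finite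

def IsOpenCover {X : Type u} [TopologicalSpace X] (U : Set (Set X)) : Prop :=
  (∀ u ∈ U, IsOpen u) ∧ ⋃₀ U = univ

def IsOmegaCover {X : Type u} [TopologicalSpace X] (U : Set (Set X)) : Prop :=
  (∀ u ∈ U, IsOpen u) ∧ univ ∉ U ∧ ∀ F : Set X, F.Finite → ∃ u ∈ U, F ⊆ u

def IsGammaCover {X : Type u} [TopologicalSpace X] (U : Set (Set X)) : Prop :=
  U.Infinite ∧ (∀ u ∈ U, IsOpen u) ∧ ∀ x : X, {u ∈ U | x ∉ u}.Finite

def BLindelof {X : Type u} [TopologicalSpace X] (B : Set (Set X)) : Prop :=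
  ∀ U, IsBCover B U → ∃ V ⊆ U, V.Countable ∧ IsBCover B V

def S1 {X : Type u} (A C : Set (Set X) → Prop) : Prop :=
  ∀ U : ℕ → Set (Set X), (∀ n, A (U n)) →
    ∃ V : ℕ → Set X, (∀ n, V n ∈ U n) ∧ C (Set.range V)

def Sfin {X : Type u} (A C : Set (Set X) → Prop) : Prop :=
  ∀ U : ℕ → Set (Set X), (∀ n, A (U n)) →
    ∃ V : ℕ → Set (Set X), (∀ n, (V n).Finite ∧ V n ⊆ U n) ∧ C (⋃ n, V n)

def Ufin {X : Type u} (A C : Set (Set X) → Prop) : Prop :=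
  ∀ U : ℕ → Set (Set X), (∀ n, A (U n)) →
    ∃ V : ℕ → Set (Set X), (∀ n, (V n).Finite ∧ V n ⊆ U n) ∧
      ((∃ n, ⋃₀ V n = univ) ∨ C {s | ∃ n, s = ⋃₀ V n})
theorem stmt7 {X : Type u} [TopologicalSpace X] (B : Set (Set X)) (hB : IsBornology B)
    (hcb : HasClosedBase B) (hL : BLindelof B) :
    S1 (IsBCover B) (IsGammaCover (X := X)) ↔ Sfin (IsBCover B) (IsGammaCover (X := X)) := by
  constructor
  · intro h1 U hU
    obtain ⟨V, hV, hγ⟩ := h1 U hU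
    refine ⟨fun n => {V n}, fun n => ⟨Set.finite_singleton _, by simpa using hV n⟩, ?_⟩
    have : (⋃ n, ({V n} : Set (Set X))) = Set.range V := by
      ext s; simp [Set.mem_range, eq_comm]
    rwa [this]
  · intro hf U hU
    -- the finite-intersection covers
    set U' : ℕ → Set (Set X) := fun n =>
      {s | ∃ u : ℕ → Set X, (∀ i ≤ n, u i ∈ U i) ∧ s = ⋂ i ≤ n, u i} with hU'def
    have hU'cover : ∀ n, IsBCover B (U' n) := by
      intro n
      refine ⟨?_, ?_, ?_⟩
      · rintro s ⟨u, hu, rfl⟩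
        exact Set.Finite.isOpen_biInter (Set.finite_Iic n)
          (fun i hi => (hU i).1 _ (hu i hi))
      · rintro ⟨u, hu, heq⟩
        have h0 : (⋂ i ≤ n, u i) ⊆ u 0 := Set.biInter_subset_of_mem (Nat.zero_le n)
        have : u 0 = univ := univ_subset_iff.mp (heq ▸ h0)
        exact (hU 0).2.1 (this ▸ hu 0 (Nat.zero_le n))
      · intro b hb
        have : ∀ i : ℕ, ∃ u ∈ U i, b ⊆ u := fun i => (hU i).2.2 b hb
        choose f hf1 hf2 using this
        refine ⟨⋂ i ≤ n, f i, ⟨f, fun i _ => hf1 i, rfl⟩, ?_⟩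
        exact Set.subset_iInter₂ fun i _ => hf2 i
    obtain ⟨V, hVfin, hγ⟩ := hf U' hU'cover
    obtain ⟨hWinf, hWopen, hWpt⟩ := hγ
    -- pick fresh elements
    have hne : ∀ m : ℕ, ((⋃ n, V n) \ ⋃ n ∈ Set.Iio m, V n).Nonempty := by
      intro m
      have hfin : (⋃ n ∈ Set.Iio m, V n).Finite :=
        Set.Finite.biUnion (Set.finite_Iio m) (fun n _ => (hVfin n).1)
      exact (hWinf.diff hfin).nonempty
    choose w hw using hne
    have hwW : ∀ m, w m ∈ ⋃ n, V n := fun m => (hw m).1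
    have hwfresh : ∀ m, ∀ n < m, w m ∉ V n := by
      intro m n hn hmem
      exact (hw m).2 (Set.mem_biUnion hn hmem)
    have hn : ∀ m : ℕ, ∃ n, m ≤ n ∧ w m ∈ V n := by
      intro m
      obtain ⟨n, hnmem⟩ := Set.mem_iUnion.mp (hwW m)
      refine ⟨n, ?_, hnmem⟩
      by_contra h
      exact hwfresh m n (Nat.lt_of_not_le h) hnmem
    choose nm hnm1 hnm2 using hn
    -- components
    have hrep : ∀ m : ℕ, ∃ s, s ∈ U m ∧ w m ⊆ s := by
      intro m
      obtain ⟨u, hu, heq⟩ := (hVfin (nm m)).2 (hnm2 m)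
      refine ⟨u m, hu m (hnm1 m), ?_⟩
      rw [heq]
      exact Set.biInter_subset_of_mem (hnm1 m)
    choose v hv1 hv2 using hrep
    -- key finiteness
    have hkey : ∀ x : X, {m : ℕ | x ∉ w m}.Finite := by
      intro x
      have hWx : {s ∈ ⋃ n, V n | x ∉ s}.Finite := hWpt x
      have hfib : ∀ s ∈ {s ∈ ⋃ n, V n | x ∉ s}, {m : ℕ | w m = s}.Finite := by
        rintro s ⟨hs, -⟩
        obtain ⟨n0, hn0⟩ := Set.mem_iUnion.mp hs
        apply Set.Finite.subset (Set.finite_Iic n0)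
        intro m hm
        simp only [Set.mem_setOf_eq] at hm
        by_contra h
        exact hwfresh m n0 (Nat.lt_of_not_le (fun hh => h (Set.mem_Iic.mpr hh))) (hm ▸ hn0)
      have hsub : {m : ℕ | x ∉ w m} ⊆ ⋃ s ∈ {s ∈ ⋃ n, V n | x ∉ s}, {m : ℕ | w m = s} := by
        intro m hm
        exact Set.mem_biUnion ⟨hwW m, hm⟩ rfl
      exact Set.Finite.subset (Set.Finite.biUnion hWx hfib) hsub
    refine ⟨v, hv1, ?_, ?_, ?_⟩
    · -- range infinite
      intro hfin
      have : ∃ s ∈ Set.range v, {m : ℕ | v m = s}.Infinite := by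
        by_contra h
        push_neg at h
        have : (Set.univ : Set ℕ) ⊆ ⋃ s ∈ Set.range v, {m : ℕ | v m = s} := by
          intro m _
          exact Set.mem_biUnion ⟨m, rfl⟩ rfl
        have hfin2 : (Set.univ : Set ℕ).Finite :=
          Set.Finite.subset (Set.Finite.biUnion hfin
            (fun s hs => h s hs)) this
        exact Set.infinite_univ hfin2
      obtain ⟨s, hs, hMinf⟩ := this
      have hsuniv : s = univ := by
        apply Set.eq_univ_of_forall
        intro x
        obtain ⟨m, hm, hmw⟩ : ∃ m, v m = s ∧ x ∈ w m := by
          obtain ⟨m, hm1, hm2⟩ := (hMinf.diff (hkey x)).nonempty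
          exact ⟨m, hm1, not_not.mp hm2⟩
        exact hm ▸ hv2 m hmw
      obtain ⟨m, hm⟩ := hMinf.nonempty
      exact (hU m).2.1 (hsuniv ▸ hm ▸ hv1 m)
    · rintro u ⟨m, rfl⟩
      exact (hU m).1 _ (hv1 m)
    · intro x
      have hsub : {u ∈ Set.range v | x ∉ u} ⊆ v '' {m : ℕ | x ∉ w m} := by
        rintro u ⟨⟨m, rfl⟩, hxu⟩
        exact ⟨m, fun hxw => hxu (hv2 m hxw), rfl⟩
      exact Set.Finite.subset (Set.Finite.image v (hkey x)) hsub
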